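/- Let a > 0 and let M = [0,a] × [0,a] ⊆ ℝ². Let c ∈ ℝ² satisfy ‖c − (a/2, a/2)‖_∞ ≤ a/4, let r > 0, and let D be the closed axis-aligned square of side length r centered at c, with D ⊆ M. For any point x ∈ M with x ≠ c, let π(x) denote the unique point of the boundary ∂M lying on the ray {c + t(x − c) : t ≥ 0}. Then for all x, y ∈ M not in the interior of D, the perimeter distance between π(x) and π(y) along ∂M is at most (40√2 · a / r) · ‖x − y‖_∞. -/

import Mathlib

/-- Arclength parametrization of the boundary of the square `[0,a] × [0,a]`,
starting at the origin and going counterclockwise; `t` ranges over `[0, 4a)`. -/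
noncomputable def sqParam (a t : ℝ) : ℝ × ℝ :=
  if t ≤ a then (t, 0)
  else if t ≤ 2 * a then (a, t - a)
  else if t ≤ 3 * a then (3 * a - t, a)
  else (0, 4 * a - t)

lemma mem_sq {a : ℝ} {p : ℝ × ℝ} :
    p ∈ Set.Icc ((0 : ℝ), (0 : ℝ)) (a, a) ↔
      (0 ≤ p.1 ∧ p.1 ≤ a) ∧ (0 ≤ p.2 ∧ p.2 ≤ a) := by
  simp [Set.mem_Icc, Prod.le_def]; tauto

lemma ray_le {s : Set (ℝ × ℝ)} (hs : Convex ℝ s) {c u : ℝ × ℝ}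
    (hcs : c ∈ interior s) {σ τ : ℝ} (hτ : 0 ≤ τ)
    (hmem : c + σ • u ∈ s) (hfr : c + τ • u ∈ frontier s) : σ ≤ τ := by
  by_contra h
  push_neg at h
  have hσ : 0 < σ := lt_of_le_of_lt hτ h
  have hα : 0 < (σ - τ) / σ := div_pos (by linarith) hσ
  have hb : 0 ≤ τ / σ := by positivity
  have hab : (σ - τ) / σ + τ / σ = 1 := by field_simp; ring
  have key : ((σ - τ) / σ) • c + (τ / σ) • (c + σ • u) = c + τ • u := by
    rw [smul_add, ← add_assoc, ← add_smul, hab, one_smul, smul_smul]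
    congr 2
    field_simp
  have : c + τ • u ∈ interior s := by
    rw [← key]
    exact hs.combo_interior_closure_mem_interior hcs (subset_closure hmem) hα hb hab
  exact hfr.2 this

lemma ball_sub_sq {a : ℝ} {c : ℝ × ℝ} {ρ : ℝ}
    (h1 : ρ ≤ c.1) (h2 : c.1 ≤ a - ρ) (h3 : ρ ≤ c.2) (h4 : c.2 ≤ a - ρ) :
    Metric.ball c ρ ⊆ Set.Icc ((0 : ℝ), (0 : ℝ)) (a, a) := by
  intro z hz
  rw [Metric.mem_ball, Prod.dist_eq, Real.dist_eq, Real.dist_eq] at hz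
  have b1 : |z.1 - c.1| < ρ := lt_of_le_of_lt (le_max_left _ _) hz
  have b2 : |z.2 - c.2| < ρ := lt_of_le_of_lt (le_max_right _ _) hz
  rw [abs_lt] at b1 b2
  exact mem_sq.mpr ⟨⟨by linarith, by linarith⟩, ⟨by linarith, by linarith⟩⟩

lemma interior_sq {a : ℝ} {c : ℝ × ℝ} (ha : 0 < a)
    (h1 : a/4 ≤ c.1) (h2 : c.1 ≤ 3*a/4) (h3 : a/4 ≤ c.2) (h4 : c.2 ≤ 3*a/4) :
    c ∈ interior (Set.Icc ((0 : ℝ), (0 : ℝ)) (a, a)) :=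
  mem_interior.mpr ⟨Metric.ball c (a/4),
    ball_sub_sq h1 (by linarith) h3 (by linarith),
    Metric.isOpen_ball, Metric.mem_ball_self (by linarith)⟩

lemma frontier_sq {a : ℝ} {p : ℝ × ℝ}
    (hp : p ∈ frontier (Set.Icc ((0 : ℝ), (0 : ℝ)) (a, a))) :
    p ∈ Set.Icc ((0 : ℝ), (0 : ℝ)) (a, a) ∧
      (p.1 = 0 ∨ p.1 = a ∨ p.2 = 0 ∨ p.2 = a) := by
  have hmem := isClosed_Icc.frontier_subset hp
  refine ⟨hmem, ?_⟩
  by_contra h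
  push_neg at h
  obtain ⟨h1, h2, h3, h4⟩ := h
  obtain ⟨⟨m1, m2⟩, m3, m4⟩ := mem_sq.mp hmem
  have s1 : 0 < p.1 := lt_of_le_of_ne m1 (Ne.symm h1)
  have s2 : p.1 < a := lt_of_le_of_ne m2 h2
  have s3 : 0 < p.2 := lt_of_le_of_ne m3 (Ne.symm h3)
  have s4 : p.2 < a := lt_of_le_of_ne m4 h4
  have : p ∈ interior (Set.Icc ((0 : ℝ), (0 : ℝ)) (a, a)) := by
    refine mem_interior.mpr ⟨Metric.ball p (min (min p.1 (a - p.1)) (min p.2 (a - p.2))), ?_, Metric.isOpen_ball, Metric.mem_ball_self (by simp; constructor <;> constructor <;> linarith)⟩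
    intro z hz
    rw [Metric.mem_ball, Prod.dist_eq, Real.dist_eq, Real.dist_eq] at hz
    have b1 : |z.1 - p.1| < min (min p.1 (a - p.1)) (min p.2 (a - p.2)) :=
      lt_of_le_of_lt (le_max_left _ _) hz
    have b2 : |z.2 - p.2| < min (min p.1 (a - p.1)) (min p.2 (a - p.2)) :=
      lt_of_le_of_lt (le_max_right _ _) hz
    have d1 : |z.1 - p.1| < p.1 := b1.trans_le ((min_le_left _ _).trans (min_le_left _ _))
    have d2 : |z.1 - p.1| < a - p.1 := b1.trans_le ((min_le_left _ _).trans (min_le_right _ _))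
    have d3 : |z.2 - p.2| < p.2 := b2.trans_le ((min_le_right _ _).trans (min_le_left _ _))
    have d4 : |z.2 - p.2| < a - p.2 := b2.trans_le ((min_le_right _ _).trans (min_le_right _ _))
    rw [abs_lt] at d1 d2 d3 d4
    exact mem_sq.mpr ⟨⟨by linarith, by linarith⟩, ⟨by linarith, by linarith⟩⟩
  exact hp.2 this
lemma norm_pair (p q : ℝ × ℝ) : ‖p - q‖ = max |p.1 - q.1| |p.2 - q.2| := by
  simp [Prod.norm_def, Real.norm_eq_abs]

lemma sq_norm_le {a : ℝ} {p c : ℝ × ℝ}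
    (hp : p ∈ Set.Icc ((0:ℝ),(0:ℝ)) (a,a))
    (h1 : a/4 ≤ c.1) (h2 : c.1 ≤ 3*a/4) (h3 : a/4 ≤ c.2) (h4 : c.2 ≤ 3*a/4) :
    ‖p - c‖ ≤ 3*a/4 := by
  obtain ⟨⟨m1, m2⟩, m3, m4⟩ := mem_sq.mp hp
  rw [norm_pair]
  apply max_le <;> rw [abs_le] <;> constructor <;> linarith

lemma sq_norm_ge {a : ℝ} {p c : ℝ × ℝ}
    (hp : p.1 = 0 ∨ p.1 = a ∨ p.2 = 0 ∨ p.2 = a)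
    (h1 : a/4 ≤ c.1) (h2 : c.1 ≤ 3*a/4) (h3 : a/4 ≤ c.2) (h4 : c.2 ≤ 3*a/4) :
    a/4 ≤ ‖p - c‖ := by
  rw [norm_pair]
  rcases hp with h | h | h | h
  · refine le_trans ?_ (le_max_left _ _)
    rw [h, zero_sub, abs_neg]
    exact le_trans h1 (le_abs_self _)
  · refine le_trans ?_ (le_max_left _ _)
    rw [h]
    exact le_trans (by linarith) (le_abs_self (a - c.1))
  · refine le_trans ?_ (le_max_right _ _)
    rw [h, zero_sub, abs_neg]
    exact le_trans h3 (le_abs_self _)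
  · refine le_trans ?_ (le_max_right _ _)
    rw [h]
    exact le_trans (by linarith) (le_abs_self (a - c.2))

lemma mem_of_close {a : ℝ} {m c : ℝ × ℝ} (h : ‖m - c‖ ≤ a/4)
    (h1 : a/4 ≤ c.1) (h2 : c.1 ≤ 3*a/4) (h3 : a/4 ≤ c.2) (h4 : c.2 ≤ 3*a/4) :
    m ∈ Set.Icc ((0:ℝ),(0:ℝ)) (a,a) := by
  rw [norm_pair] at h
  have b1 : |m.1 - c.1| ≤ a/4 := le_trans (le_max_left _ _) h
  have b2 : |m.2 - c.2| ≤ a/4 := le_trans (le_max_right _ _) h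
  rw [abs_le] at b1 b2
  exact mem_sq.mpr ⟨⟨by linarith, by linarith⟩, by linarith, by linarith⟩

lemma gauge_subadd (a : ℝ) (ha : 0 < a) {c x y p q : ℝ × ℝ}
    (h1 : a/4 ≤ c.1) (h2 : c.1 ≤ 3*a/4) (h3 : a/4 ≤ c.2) (h4 : c.2 ≤ 3*a/4)
    (hp : p ∈ frontier (Set.Icc ((0:ℝ),(0:ℝ)) (a,a)))
    (hq : q ∈ frontier (Set.Icc ((0:ℝ),(0:ℝ)) (a,a)))
    {tx ty : ℝ} (htx : 0 < tx) (hty : 0 < ty)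
    (hpx : p = c + tx • (x - c)) (hqy : q = c + ty • (y - c)) :
    1 / tx ≤ 1 / ty + (4 / a) * ‖x - y‖ := by
  have hconv : Convex ℝ (Set.Icc ((0:ℝ),(0:ℝ)) (a,a)) := convex_Icc _ _
  have hcint := interior_sq ha h1 h2 h3 h4
  have hqM : q ∈ Set.Icc ((0:ℝ),(0:ℝ)) (a,a) := isClosed_Icc.frontier_subset hq
  have hpf : c + tx • (x - c) ∈ frontier (Set.Icc ((0:ℝ),(0:ℝ)) (a,a)) := by
    rw [← hpx]; exact hp
  by_cases hN : ‖x - y‖ = 0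
  · have hxy : x = y := by rwa [norm_sub_eq_zero_iff] at hN
    have hmem : c + ty • (x - c) ∈ Set.Icc ((0:ℝ),(0:ℝ)) (a,a) := by
      rw [hxy, ← hqy]; exact hqM
    have hle : ty ≤ tx := ray_le hconv hcint htx.le hmem hpf
    rw [hN, mul_zero, add_zero]
    exact one_div_le_one_div_of_le hty hle
  · have hN' : 0 < ‖x - y‖ := (norm_nonneg _).lt_of_ne (Ne.symm hN)
    obtain ⟨β, hβ⟩ : ∃ β : ℝ, β = (4 / a) * ‖x - y‖ := ⟨_, rfl⟩
    have hβ0 : 0 < β := by rw [hβ]; positivity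
    have hβ' : β ≠ 0 := ne_of_gt hβ0
    have hmc : ‖(c + (1/β) • (x - y)) - c‖ = a/4 := by
      have e : (c + (1/β) • (x - y)) - c = (1/β) • (x - y) := by abel
      rw [e, norm_smul, Real.norm_eq_abs, abs_of_nonneg (by positivity), hβ]
      field_simp
    have hmM : c + (1/β) • (x - y) ∈ Set.Icc ((0:ℝ),(0:ℝ)) (a,a) :=
      mem_of_close (le_of_eq hmc) h1 h2 h3 h4
    obtain ⟨S, hS⟩ : ∃ S : ℝ, S = 1/ty + β := ⟨_, rfl⟩
    have hS0 : 0 < S := by rw [hS]; positivity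
    have hS' : S ≠ 0 := ne_of_gt hS0
    have hty' : ty ≠ 0 := ne_of_gt hty
    have e3 : 1/(ty*S) + β/S = 1 := by
      rw [hS]; field_simp
    have k1 : (1/(ty*S)) * ty = 1/S := by field_simp
    have k2 : (β/S) * (1/β) = 1/S := by field_simp
    have hcomb : (1/(ty*S)) • q + (β/S) • (c + (1/β) • (x - y)) = c + (1/S) • (x - c) := by
      rw [hqy]
      calc (1/(ty*S)) • (c + ty • (y - c)) + (β/S) • (c + (1/β) • (x - y))
          = (1/(ty*S)) • c + (1/S) • (y - c) + ((β/S) • c + (1/S) • (x - y)) := by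
            rw [smul_add, smul_add, smul_smul, smul_smul, k1, k2]
        _ = (1/(ty*S) + β/S) • c + (1/S) • ((y - c) + (x - y)) := by
            rw [add_smul, smul_add]; abel
        _ = c + (1/S) • (x - c) := by
            rw [e3, one_smul, show (y - c) + (x - y) = x - c by abel]
    have hmemS : c + (1/S) • (x - c) ∈ Set.Icc ((0:ℝ),(0:ℝ)) (a,a) := by
      rw [← hcomb]
      exact hconv hqM hmM (by positivity) (by positivity) e3
    have hle : 1/S ≤ tx := ray_le hconv hcint htx.le hmemS hpf
    have h5 := one_div_le_one_div_of_le (by positivity : (0:ℝ) < 1/S) hle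
    rw [one_div_one_div] at h5
    rw [← hβ, ← hS]
    exact h5

lemma proj_lip (a : ℝ) (ha : 0 < a) {c x y p q : ℝ × ℝ} (r : ℝ) (hr : 0 < r)
    (h1 : a/4 ≤ c.1) (h2 : c.1 ≤ 3*a/4) (h3 : a/4 ≤ c.2) (h4 : c.2 ≤ 3*a/4)
    (hxc : r/2 ≤ ‖x - c‖) (hyc : r/2 ≤ ‖y - c‖)
    (hp : p ∈ frontier (Set.Icc ((0:ℝ),(0:ℝ)) (a,a)))
    (hq : q ∈ frontier (Set.Icc ((0:ℝ),(0:ℝ)) (a,a)))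
    {tx ty : ℝ} (htx0 : 0 ≤ tx) (hty0 : 0 ≤ ty)
    (hpx : p = c + tx • (x - c)) (hqy : q = c + ty • (y - c)) :
    ‖p - q‖ ≤ (6 * a / r) * ‖x - y‖ := by
  obtain ⟨hpM, hpalt⟩ := frontier_sq hp
  obtain ⟨hqM, hqalt⟩ := frontier_sq hq
  have hAle : ‖p - c‖ ≤ 3*a/4 := sq_norm_le hpM h1 h2 h3 h4
  have hAge : a/4 ≤ ‖p - c‖ := sq_norm_ge hpalt h1 h2 h3 h4
  have hBle : ‖q - c‖ ≤ 3*a/4 := sq_norm_le hqM h1 h2 h3 h4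
  have hBge : a/4 ≤ ‖q - c‖ := sq_norm_ge hqalt h1 h2 h3 h4
  have hpA : ‖p - c‖ = tx * ‖x - c‖ := by
    rw [hpx, add_sub_cancel_left, norm_smul, Real.norm_eq_abs, abs_of_nonneg htx0]
  have hqB : ‖q - c‖ = ty * ‖y - c‖ := by
    rw [hqy, add_sub_cancel_left, norm_smul, Real.norm_eq_abs, abs_of_nonneg hty0]
  have htx : 0 < tx := by
    rcases htx0.lt_or_eq with h | h
    · exact h
    · exfalso; rw [← h, zero_mul] at hpA; rw [hpA] at hAge; linarith
  have hty : 0 < ty := by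
    rcases hty0.lt_or_eq with h | h
    · exact h
    · exfalso; rw [← h, zero_mul] at hqB; rw [hqB] at hBge; linarith
  have htx' : tx ≠ 0 := htx.ne'
  have hty' : ty ≠ 0 := hty.ne'
  have htxle : tx ≤ 3*a/(2*r) := by
    rw [hpA] at hAle
    rw [le_div_iff₀ (by linarith : (0:ℝ) < 2*r)]
    nlinarith
  have g1 := gauge_subadd a ha h1 h2 h3 h4 hp hq htx hty hpx hqy
  have g2 := gauge_subadd a ha h1 h2 h3 h4 hq hp hty htx hqy hpx
  rw [norm_sub_rev y x] at g2
  have w1 : ty ≤ tx + tx*ty*((4/a)*‖x-y‖) := by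
    have hm := mul_le_mul_of_nonneg_left g1 (mul_pos htx hty).le
    calc ty = tx*ty*(1/tx) := by field_simp
      _ ≤ tx*ty*(1/ty + (4/a)*‖x-y‖) := hm
      _ = tx + tx*ty*((4/a)*‖x-y‖) := by field_simp
  have w2 : tx ≤ ty + tx*ty*((4/a)*‖x-y‖) := by
    have hm := mul_le_mul_of_nonneg_left g2 (mul_pos htx hty).le
    calc tx = tx*ty*(1/ty) := by field_simp
      _ ≤ tx*ty*(1/tx + (4/a)*‖x-y‖) := hm
      _ = ty + tx*ty*((4/a)*‖x-y‖) := by field_simp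
  have habs : |tx - ty| ≤ tx * ty * ((4/a) * ‖x - y‖) := abs_le.mpr ⟨by linarith, by linarith⟩
  have hdec : p - q = tx • (x - y) + (tx - ty) • (y - c) := by
    rw [hpx, hqy]; module
  have hnorm : ‖p - q‖ ≤ tx * ‖x - y‖ + |tx - ty| * ‖y - c‖ := by
    rw [hdec]
    refine le_trans (norm_add_le _ _) ?_
    rw [norm_smul, norm_smul, Real.norm_eq_abs, Real.norm_eq_abs, abs_of_nonneg htx0]
  have k2 : ty * ‖y - c‖ ≤ 3*a/4 := by rw [← hqB]; exact hBle
  have ha4 : (4/a) * (3*a/4) = 3 := by field_simp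
  calc ‖p - q‖ ≤ tx * ‖x - y‖ + |tx - ty| * ‖y - c‖ := hnorm
    _ ≤ tx * ‖x - y‖ + (tx * ty * ((4/a) * ‖x - y‖)) * ‖y - c‖ :=
        add_le_add (le_refl _) (mul_le_mul_of_nonneg_right habs (norm_nonneg _))
    _ = tx * ‖x - y‖ + (tx * ((4/a) * ‖x - y‖)) * (ty * ‖y - c‖) := by ring
    _ ≤ tx * ‖x - y‖ + (tx * ((4/a) * ‖x - y‖)) * (3*a/4) := by
        refine add_le_add (le_refl _) (mul_le_mul_of_nonneg_left k2 ?_)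
        positivity
    _ = tx * ‖x - y‖ + 3 * tx * ‖x - y‖ := by
        linear_combination (tx * ‖x - y‖) * ha4
    _ = 4 * tx * ‖x - y‖ := by ring
    _ ≤ 4 * (3*a/(2*r)) * ‖x - y‖ := by
        have := mul_le_mul_of_nonneg_right htxle (norm_nonneg (x - y))
        nlinarith [norm_nonneg (x - y)]
    _ = (6*a/r) * ‖x - y‖ := by
        rw [show 4 * (3*a/(2*r)) = 6*a/r by field_simp; ring]

lemma perim_aux (a s t : ℝ) (ha : 0 < a) (hs : 0 ≤ s) (hst : s ≤ t) (ht : t < 4 * a) :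
    min |s - t| (4 * a - |s - t|) ≤ 2 * ‖sqParam a s - sqParam a t‖ := by
  have habs : |s - t| = t - s := by rw [abs_sub_comm]; exact abs_of_nonneg (by linarith)
  rw [habs, norm_pair]
  have hmid : ∀ u v : ℝ, a ≤ max |u| |v| → min (t - s) (4 * a - (t - s)) ≤ 2 * max |u| |v| := by
    intro u v h
    rcases le_total (t - s) (2 * a) with h' | h'
    · exact le_trans (min_le_left _ _) (by linarith)
    · exact le_trans (min_le_right _ _) (by linarith)
  by_cases h1 : s ≤ a
  · by_cases h2 : t ≤ a
    · simp only [sqParam, if_pos h1, if_pos h2]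
      refine le_trans (min_le_left _ _) ?_
      rw [habs]
      linarith [le_max_left (t - s) |(0:ℝ) - 0|]
    · push_neg at h2
      by_cases h3 : t ≤ 2 * a
      · simp only [sqParam, if_pos h1, if_neg (not_le.mpr h2), if_pos h3]
        refine le_trans (min_le_left _ _) ?_
        have e1 : |s - a| = a - s := by rw [abs_sub_comm]; exact abs_of_nonneg (by linarith)
        have e2 : |(0:ℝ) - (t - a)| = t - a := by
          rw [zero_sub, abs_neg]; exact abs_of_nonneg (by linarith)
        rw [e1, e2]
        have := le_max_left (a - s) (t - a)
        have := le_max_right (a - s) (t - a)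
        linarith
      · push_neg at h3
        by_cases h4 : t ≤ 3 * a
        · simp only [sqParam, if_pos h1, if_neg (not_le.mpr h2), if_neg (not_le.mpr h3), if_pos h4]
          apply hmid
          have e2 : |(0:ℝ) - a| = a := by simp [abs_of_nonneg ha.le]
          rw [e2]; exact le_max_right _ _
        · push_neg at h4
          simp only [sqParam, if_pos h1, if_neg (not_le.mpr h2), if_neg (not_le.mpr h3),
            if_neg (not_le.mpr h4)]
          refine le_trans (min_le_right _ _) ?_
          have e1 : |s - 0| = s := by rw [sub_zero]; exact abs_of_nonneg hs
          have e2 : |(0:ℝ) - (4 * a - t)| = 4 * a - t := by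
            rw [zero_sub, abs_neg]; exact abs_of_nonneg (by linarith)
          rw [e1, e2]
          have := le_max_left s (4 * a - t)
          have := le_max_right s (4 * a - t)
          linarith
  · push_neg at h1
    have hs1 : ¬ s ≤ a := not_le.mpr h1
    by_cases h2 : s ≤ 2 * a
    · by_cases h3 : t ≤ 2 * a
      · have ht1 : ¬ t ≤ a := not_le.mpr (by linarith)
        simp only [sqParam, if_neg hs1, if_pos h2, if_neg ht1, if_pos h3]
        refine le_trans (min_le_left _ _) ?_
        have e2 : |s - a - (t - a)| = t - s := by
          rw [show s - a - (t - a) = s - t by ring, abs_sub_comm]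
          exact abs_of_nonneg (by linarith)
        rw [e2]
        linarith [le_max_right |a - a| (t - s), abs_nonneg (a - a)]
      · push_neg at h3
        have ht1 : ¬ t ≤ a := not_le.mpr (by linarith)
        by_cases h4 : t ≤ 3 * a
        · simp only [sqParam, if_neg hs1, if_pos h2, if_neg ht1, if_neg (not_le.mpr h3), if_pos h4]
          refine le_trans (min_le_left _ _) ?_
          have e1 : |a - (3 * a - t)| = t - 2 * a := by
            rw [show a - (3 * a - t) = t - 2 * a by ring]
            exact abs_of_nonneg (by linarith)
          have e2 : |s - a - a| = 2 * a - s := by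
            rw [show s - a - a = s - 2 * a by ring, abs_sub_comm]
            exact abs_of_nonneg (by linarith)
          rw [e1, e2]
          have := le_max_left (t - 2 * a) (2 * a - s)
          have := le_max_right (t - 2 * a) (2 * a - s)
          linarith
        · push_neg at h4
          simp only [sqParam, if_neg hs1, if_pos h2, if_neg ht1, if_neg (not_le.mpr h3),
            if_neg (not_le.mpr h4)]
          apply hmid
          have e1 : |a - 0| = a := by simp [abs_of_nonneg ha.le]
          rw [e1]; exact le_max_left _ _
    · push_neg at h2
      have ht1 : ¬ t ≤ a := not_le.mpr (by linarith)
      have ht2 : ¬ t ≤ 2 * a := not_le.mpr (by linarith)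
      by_cases h3 : s ≤ 3 * a
      · by_cases h4 : t ≤ 3 * a
        · simp only [sqParam, if_neg hs1, if_neg (not_le.mpr h2), if_pos h3, if_neg ht1,
            if_neg ht2, if_pos h4]
          refine le_trans (min_le_left _ _) ?_
          have e1 : |3 * a - s - (3 * a - t)| = t - s := by
            rw [show 3 * a - s - (3 * a - t) = t - s by ring]
            exact abs_of_nonneg (by linarith)
          rw [e1]
          linarith [le_max_left (t - s) |a - a|, abs_nonneg (a - a)]
        · push_neg at h4
          simp only [sqParam, if_neg hs1, if_neg (not_le.mpr h2), if_pos h3, if_neg ht1,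
            if_neg ht2, if_neg (not_le.mpr h4)]
          refine le_trans (min_le_left _ _) ?_
          have e1 : |3 * a - s - 0| = 3 * a - s := by
            rw [sub_zero]; exact abs_of_nonneg (by linarith)
          have e2 : |a - (4 * a - t)| = t - 3 * a := by
            rw [show a - (4 * a - t) = t - 3 * a by ring]
            exact abs_of_nonneg (by linarith)
          rw [e1, e2]
          have := le_max_left (3 * a - s) (t - 3 * a)
          have := le_max_right (3 * a - s) (t - 3 * a)
          linarith
      · push_neg at h3
        have hs3 : ¬ s ≤ 3 * a := not_le.mpr h3
        have ht4 : ¬ t ≤ 3 * a := not_le.mpr (by linarith)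
        simp only [sqParam, if_neg hs1, if_neg (not_le.mpr h2), if_neg hs3, if_neg ht1,
          if_neg ht2, if_neg ht4]
        refine le_trans (min_le_left _ _) ?_
        have e2 : |4 * a - s - (4 * a - t)| = t - s := by
          rw [show 4 * a - s - (4 * a - t) = t - s by ring]
          exact abs_of_nonneg (by linarith)
        rw [e2]
        linarith [le_max_right |(0:ℝ) - 0| (t - s), abs_nonneg ((0:ℝ) - 0)]

lemma perim (a s t : ℝ) (ha : 0 < a) (hs : s ∈ Set.Ico (0:ℝ) (4 * a))
    (ht : t ∈ Set.Ico (0:ℝ) (4 * a)) :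
    min |s - t| (4 * a - |s - t|) ≤ 2 * ‖sqParam a s - sqParam a t‖ := by
  rcases le_total s t with h | h
  · exact perim_aux a s t ha hs.1 h ht.2
  · rw [abs_sub_comm, norm_sub_rev]
    exact perim_aux a t s ha ht.1 h hs.2

/-- Let `M = [0,a]²` (with the sup norm on `ℝ²`), let `D` be a closed
axis-aligned square of side `r` centered at `c`, where `c` is within `L∞` distance
`a/4` of the center of `M` and `D ⊆ M`.  For `x ∈ M`, `x ≠ c`, let `π x` be the unique
point of `∂M` on the ray from `c` through `x`.  Then for all `x, y ∈ M` not in the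
interior of `D`, the perimeter distance along `∂M` between `π x` and `π y` is at most
`(40√2·a/r)·‖x − y‖_∞`.  The perimeter distance is expressed via the arclength
parametrization `sqParam a` of `∂M` (total length `4a`). -/
theorem square_projection_stretch (a : ℝ) (ha : 0 < a)
    (c : ℝ × ℝ) (hc : ‖c - (a / 2, a / 2)‖ ≤ a / 4)
    (r : ℝ) (hr : 0 < r)
    (hD : Metric.closedBall c (r / 2) ⊆ Set.Icc ((0 : ℝ), (0 : ℝ)) (a, a))
    (π : ℝ × ℝ → ℝ × ℝ)
    (hπ : ∀ x ∈ Set.Icc ((0 : ℝ), (0 : ℝ)) (a, a), x ≠ c →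
      π x ∈ frontier (Set.Icc ((0 : ℝ), (0 : ℝ)) (a, a)) ∧
        ∃ t : ℝ, 0 ≤ t ∧ π x = c + t • (x - c)) :
    ∀ x ∈ Set.Icc ((0 : ℝ), (0 : ℝ)) (a, a),
    ∀ y ∈ Set.Icc ((0 : ℝ), (0 : ℝ)) (a, a),
      x ∉ interior (Metric.closedBall c (r / 2)) →
      y ∉ interior (Metric.closedBall c (r / 2)) →
      ∀ s t : ℝ, s ∈ Set.Ico (0 : ℝ) (4 * a) → t ∈ Set.Ico (0 : ℝ) (4 * a) →
        sqParam a s = π x → sqParam a t = π y →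
        min |s - t| (4 * a - |s - t|) ≤ (40 * Real.sqrt 2 * a / r) * ‖x - y‖ := by
  intro x hx y hy hxD hyD s t hs ht hsx hty2
  have hcr : max |c.1 - a/2| |c.2 - a/2| ≤ a/4 := by
    rw [norm_pair] at hc; exact hc
  have b1 : |c.1 - a/2| ≤ a/4 := le_trans (le_max_left _ _) hcr
  have b2 : |c.2 - a/2| ≤ a/4 := le_trans (le_max_right _ _) hcr
  rw [abs_le] at b1 b2
  have h1 : a/4 ≤ c.1 := by linarith [b1.1]
  have h2 : c.1 ≤ 3*a/4 := by linarith [b1.2]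
  have h3 : a/4 ≤ c.2 := by linarith [b2.1]
  have h4 : c.2 ≤ 3*a/4 := by linarith [b2.2]
  have hball : interior (Metric.closedBall c (r/2)) = Metric.ball c (r/2) :=
    interior_closedBall c (by positivity)
  have hxc : r/2 ≤ ‖x - c‖ := by
    rw [hball, Metric.mem_ball, dist_eq_norm] at hxD
    exact not_lt.mp hxD
  have hyc : r/2 ≤ ‖y - c‖ := by
    rw [hball, Metric.mem_ball, dist_eq_norm] at hyD
    exact not_lt.mp hyD
  have hxne : x ≠ c := by
    intro h; rw [h, sub_self, norm_zero] at hxc; linarith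
  have hyne : y ≠ c := by
    intro h; rw [h, sub_self, norm_zero] at hyc; linarith
  obtain ⟨hfx, tx, htx0, hpx⟩ := hπ x hx hxne
  obtain ⟨hfy, ty, hty0, hqy⟩ := hπ y hy hyne
  have hlip : ‖π x - π y‖ ≤ (6 * a / r) * ‖x - y‖ :=
    proj_lip a ha r hr h1 h2 h3 h4 hxc hyc hfx hfy htx0 hty0 hpx hqy
  have hperim := perim a s t ha hs ht
  rw [hsx, hty2] at hperim
  have hsq : (1:ℝ) ≤ Real.sqrt 2 := by
    rw [show (1:ℝ) = Real.sqrt 1 by simp]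
    exact Real.sqrt_le_sqrt (by norm_num)
  have h12 : 12*a/r ≤ 40*Real.sqrt 2*a/r := by
    gcongr
    nlinarith
  calc min |s - t| (4 * a - |s - t|) ≤ 2 * ‖π x - π y‖ := hperim
    _ ≤ 2 * ((6*a/r) * ‖x - y‖) := by linarith
    _ = (12*a/r) * ‖x - y‖ := by ring
    _ ≤ (40*Real.sqrt 2*a/r) * ‖x - y‖ :=
        mul_le_mul_of_nonneg_right h12 (norm_nonneg (x - y))
    _ = (40 * Real.sqrt 2 * a / r) * ‖x - y‖ := by ring
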